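/- Let $q$ be a power of an odd prime $p$, let $0 < i < n$, $d = \gcd(i,n)$, $l = n/d$, and assume $n \neq 2i$. Let $M_{n,i} = (\mathcal{P}^i)^T - 2\,\mathrm{Id} + \mathcal{P}^i$ over $\mathbb{F}_q$. Then $\mathrm{rank}(M_{n,i}) = n - d$ if $p \nmid l$, and $\mathrm{rank}(M_{n,i}) = n - 2d$ if $p \mid l$. -/

import Mathlib

open Polynomial Module Matrix

lemma aux_dvd_pow_sub_one {F : Type*} [CommRing F] {c j : ℕ} (h : c ∣ j) :
    (X ^ c - 1 : F[X]) ∣ X ^ j - 1 := by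
  obtain ⟨t, rfl⟩ := h
  have := sub_dvd_pow_sub_pow (X ^ c : F[X]) 1 t
  simpa [← pow_mul] using this

lemma aux_common_dvd {F : Type*} [CommRing F] :
    ∀ j, ∀ m, ∀ δ : F[X], δ ∣ X ^ j - 1 → δ ∣ X ^ m - 1 → δ ∣ X ^ Nat.gcd j m - 1 := by
  intro j
  induction j using Nat.strong_induction_on with
  | _ j IH =>
    intro m δ hj hm
    rcases Nat.eq_zero_or_pos j with rfl | hjpos
    · simpa [Nat.gcd_zero_left] using hm
    · rw [Nat.gcd_rec j m]
      refine IH (m % j) (Nat.mod_lt _ hjpos) j δ ?_ hj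
      have h1 : (X ^ j - 1 : F[X]) ∣ X ^ (j * (m / j)) - 1 :=
        aux_dvd_pow_sub_one ⟨m / j, rfl⟩
      have h2 : δ ∣ (X ^ m - 1 : F[X]) - X ^ (m % j) * (X ^ (j * (m / j)) - 1) :=
        dvd_sub hm (Dvd.dvd.mul_left (hj.trans h1) _)
      have h3 : (X ^ m - 1 : F[X]) - X ^ (m % j) * (X ^ (j * (m / j)) - 1)
          = X ^ (m % j) - 1 := by
        have : (X : F[X]) ^ (m % j) * X ^ (j * (m / j)) = X ^ m := by
          rw [← pow_add]
          congr 1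
          exact Nat.mod_add_div m j
        linear_combination (-1 : F[X]) * this
      rwa [h3] at h2

lemma aux_rank_lmul {F : Type*} [Field F] (e h' g' : F[X]) (he : e ≠ 0) (hh' : h'.Monic)
    (hco : IsCoprime g' h') :
    finrank F (LinearMap.range (Algebra.lmul F (AdjoinRoot (e * h'))
      (AdjoinRoot.mk (e * h') (e * g')))) = h'.natDegree := by
  set h := e * h' with hhdef
  have hmk : ∀ u v : F[X], AdjoinRoot.mk h u * AdjoinRoot.mk h v = AdjoinRoot.mk h (u * v) :=
    fun u v => (map_mul _ u v).symm
  have hstep1 : LinearMap.range (Algebra.lmul F (AdjoinRoot h) (AdjoinRoot.mk h (e * g')))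
      = LinearMap.range (Algebra.lmul F (AdjoinRoot h) (AdjoinRoot.mk h e)) := by
    obtain ⟨a, b, hab⟩ := hco
    apply le_antisymm
    · rintro x ⟨y, rfl⟩
      refine ⟨AdjoinRoot.mk h g' * y, ?_⟩
      simp only [Algebra.coe_lmul_eq_mul, LinearMap.mul_apply']
      rw [← mul_assoc, hmk]
    · rintro x ⟨y, rfl⟩
      refine ⟨AdjoinRoot.mk h a * y, ?_⟩
      simp only [Algebra.coe_lmul_eq_mul, LinearMap.mul_apply']
      rw [← mul_assoc, hmk]
      have : AdjoinRoot.mk h (e * g' * a) = AdjoinRoot.mk h e := by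
        have h2 : e * g' * a = e * (a * g' + b * h') - (e * b) * h' := by ring
        rw [h2, map_sub, hab, mul_one]
        have h3 : AdjoinRoot.mk h (e * b * h') = 0 := by
          rw [AdjoinRoot.mk_eq_zero]
          exact ⟨b, by ring⟩
        rw [h3, sub_zero]
      rw [this]
  rw [hstep1]
  set θ : F[X] →ₗ[F] AdjoinRoot h :=
    (LinearMap.mul F (AdjoinRoot h) (AdjoinRoot.mk h e)).comp
      (aeval (AdjoinRoot.root h)).toLinearMap with hθ
  have hθapp : ∀ f : F[X], θ f = AdjoinRoot.mk h (e * f) := by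
    intro f
    rw [hθ, LinearMap.comp_apply, AlgHom.toLinearMap_apply, AdjoinRoot.aeval_eq,
      LinearMap.mul_apply', hmk]
  have hrangeθ : LinearMap.range θ
      = LinearMap.range (Algebra.lmul F (AdjoinRoot h) (AdjoinRoot.mk h e)) := by
    rw [hθ, LinearMap.range_comp_of_range_eq_top]
    · rfl
    · rw [LinearMap.range_eq_top]
      intro y
      obtain ⟨f, rfl⟩ := AdjoinRoot.mk_surjective (g := h) y
      exact ⟨f, AdjoinRoot.aeval_eq f⟩
  rw [← hrangeθ]
  have hh'0 : h' ≠ 0 := hh'.ne_zero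
  set W := degreeLT F h'.natDegree with hW
  have hrange2 : LinearMap.range (θ.domRestrict W) = LinearMap.range θ := by
    apply le_antisymm
    · rintro x ⟨y, rfl⟩; exact ⟨y, rfl⟩
    · rintro x ⟨f, rfl⟩
      have hmem : f %ₘ h' ∈ W := by
        rw [hW, mem_degreeLT]
        exact (degree_modByMonic_lt f hh').trans_le degree_le_natDegree
      refine ⟨⟨f %ₘ h', hmem⟩, ?_⟩
      rw [LinearMap.domRestrict_apply, hθapp, hθapp]
      conv_rhs => rw [← modByMonic_add_div f h']
      rw [mul_add, map_add]
      have : AdjoinRoot.mk h (e * (h' * (f /ₘ h'))) = 0 := by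
        rw [AdjoinRoot.mk_eq_zero]
        exact ⟨f /ₘ h', by ring⟩
      rw [this, add_zero]
  rw [← hrange2]
  have hinj : Function.Injective (θ.domRestrict W) := by
    rw [← LinearMap.ker_eq_bot]
    apply (Submodule.eq_bot_iff _).mpr
    rintro ⟨f, hf⟩ hker
    rw [LinearMap.mem_ker, LinearMap.domRestrict_apply, hθapp, AdjoinRoot.mk_eq_zero] at hker
    have hdvd : h' ∣ f := (mul_dvd_mul_iff_left he).mp hker
    have : f = 0 := by
      by_contra hf0
      rw [mem_degreeLT] at hf
      exact absurd (eq_zero_of_dvd_of_degree_lt hdvd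
        (by rwa [degree_eq_natDegree hh'0])) hf0
    simp [this]
  rw [LinearMap.finrank_range_of_inj hinj]
  rw [LinearEquiv.finrank_eq (degreeLTEquiv F h'.natDegree)]
  simp

lemma aux_rank_lmul' {F : Type*} [Field F] (h g e h' g' : F[X]) (hh : h = e * h')
    (hg : g = e * g') (he : e ≠ 0) (hh' : h'.Monic) (hco : IsCoprime g' h') :
    finrank F (LinearMap.range (Algebra.lmul F (AdjoinRoot h)
      (AdjoinRoot.mk h g))) = h'.natDegree := by
  subst hh hg
  exact aux_rank_lmul e h' g' he hh' hco

def auxZEquiv (n : ℕ) [NeZero n] : Fin n ≃ ZMod n :=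
  { toFun := fun k => ((k : ℕ) : ZMod n)
    invFun := fun z => ⟨z.val, z.val_lt⟩
    left_inv := fun k => by
      ext
      simp [ZMod.val_natCast_of_lt k.isLt]
    right_inv := fun z => by
      simp [ZMod.natCast_val, ZMod.cast_id] }

theorem stmt_13 (p s n i d l q : ℕ) (hp : p.Prime) (hodd : p ≠ 2) (hs : 0 < s)
    (hq : q = p ^ s) (hi : 0 < i) (hin : i < n) (hd : d = Nat.gcd i n) (hl : l = n / d)
    (hn2i : n ≠ 2 * i) [NeZero n]
    (Fq : Type*) [Field Fq] [Fintype Fq] (hcardq : Fintype.card Fq = q)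
    (P : Matrix (ZMod n) (ZMod n) Fq)
    (hP : ∀ z w : ZMod n, P z w = if w = z + 1 then 1 else 0) :
    ((P ^ i).transpose - 2 + P ^ i).rank = if p ∣ l then n - 2 * d else n - d := by
  classical
  haveI : Fact p.Prime := ⟨hp⟩
  have hn0 : 0 < n := lt_trans hi hin
  -- characteristic
  haveI hchar : CharP Fq p := by
    haveI : CharP Fq (ringChar Fq) := ringChar.charP Fq
    have hrp : (ringChar Fq).Prime := CharP.char_is_prime Fq (ringChar Fq)
    obtain ⟨k, -, hcard2⟩ := FiniteField.card Fq (ringChar Fq)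
    have hdvd : ringChar Fq ∣ p ^ s := by
      rw [← hq, ← hcardq, hcard2]
      exact dvd_pow_self _ (by positivity)
    have : ringChar Fq = p := (Nat.prime_dvd_prime_iff_eq hrp hp).mp (hrp.dvd_of_dvd_pow hdvd)
    rwa [this] at ‹CharP Fq (ringChar Fq)›
  -- matrix reductions
  have hPPt : P * Pᵀ = 1 := by
    ext z w
    simp only [Matrix.mul_apply, Matrix.transpose_apply, hP, Matrix.one_apply]
    simp only [ite_mul, one_mul, zero_mul]
    rw [Finset.sum_ite_eq' Finset.univ (z + 1)]
    simp [add_left_inj, eq_comm]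
  have hPtP : Pᵀ * P = 1 := mul_eq_one_comm.mp hPPt
  have hcomm : Commute P Pᵀ := hPPt.trans hPtP.symm
  have hunit : IsUnit (P ^ i).det := by
    have : IsUnit P.det := Matrix.isUnit_det_of_right_inverse hPPt
    rw [Matrix.det_pow]
    exact this.pow i
  have hPiPit : P ^ i * (P ^ i)ᵀ = 1 := by
    rw [Matrix.transpose_pow, ← hcomm.mul_pow, hPPt, one_pow]
  have hkey : P ^ i * ((P ^ i)ᵀ - 2 + P ^ i) = (P ^ i - 1) ^ 2 := by
    rw [mul_add, mul_sub, hPiPit]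
    noncomm_ring
  have hrk1 : ((P ^ i)ᵀ - 2 + P ^ i).rank = ((aeval Pᵀ) ((X ^ i - 1) ^ 2 : Fq[X])).rank := by
    have h1 : ((P ^ i)ᵀ - 2 + P ^ i).rank = ((P ^ i - 1) ^ 2).rank := by
      rw [← hkey, Matrix.rank_mul_eq_right_of_isUnit_det _ _ hunit]
    have h2 : ((P ^ i - 1) ^ 2).rank = ((Pᵀ ^ i - 1) ^ 2).rank := by
      rw [← Matrix.rank_transpose ((P ^ i - 1) ^ 2)]
      congr 1
      rw [Matrix.transpose_pow, Matrix.transpose_sub, Matrix.transpose_pow,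
        Matrix.transpose_one]
    have h3 : (aeval Pᵀ) ((X ^ i - 1) ^ 2 : Fq[X]) = (Pᵀ ^ i - 1) ^ 2 := by
      simp [map_pow, map_sub, aeval_X, _root_.map_one]
    rw [h1, h2, h3]
  -- the AdjoinRoot model
  set h : Fq[X] := X ^ n - 1 with hhdef
  have hmonic : h.Monic := by
    have := monic_X_pow_sub_C (1 : Fq) hn0.ne'
    simpa [hhdef, _root_.map_one] using this
  have hne : h ≠ 0 := hmonic.ne_zero
  have hdeg : h.natDegree = n := by
    have : (X ^ n - C (1 : Fq)).natDegree = n := natDegree_X_pow_sub_C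
    simpa [hhdef, _root_.map_one] using this
  have hdim : (AdjoinRoot.powerBasis hne).dim = n := by
    rw [AdjoinRoot.powerBasis_dim, hdeg]
  set b : Basis (ZMod n) Fq (AdjoinRoot h) :=
    (AdjoinRoot.powerBasis hne).basis.reindex ((finCongr hdim).trans (auxZEquiv n)) with hbdef
  have hb : ∀ k : ZMod n, b k = AdjoinRoot.root h ^ (ZMod.val k) := by
    intro k
    rw [hbdef, Basis.reindex_apply, PowerBasis.basis_eq_pow, AdjoinRoot.powerBasis_gen]
    rfl
  have hroot : AdjoinRoot.root h ^ n = 1 := by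
    have h0 : (aeval (AdjoinRoot.root h)) h = 0 := by
      rw [AdjoinRoot.aeval_eq, AdjoinRoot.mk_eq_zero]
    rw [hhdef] at h0
    simp only [map_sub, map_pow, aeval_X, _root_.map_one] at h0
    linear_combination h0
  have hmodp : ∀ t : ℕ, AdjoinRoot.root h ^ t = AdjoinRoot.root h ^ (t % n) := by
    intro t
    conv_lhs => rw [← Nat.mod_add_div t n, pow_add, pow_mul, hroot, one_pow, mul_one]
  have hpowmod : ∀ a b : ℕ, (a : ZMod n) = (b : ZMod n) →
      AdjoinRoot.root h ^ a = AdjoinRoot.root h ^ b := by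
    intro a b hab
    rw [ZMod.natCast_eq_natCast_iff] at hab
    rw [hmodp a, hmodp b, hab]
  have hPt : Pᵀ = LinearMap.toMatrix b b ((Algebra.lmul Fq (AdjoinRoot h)) (AdjoinRoot.root h)) := by
    ext z w
    rw [LinearMap.toMatrix_apply, Matrix.transpose_apply, hP]
    have hmul : (Algebra.lmul Fq (AdjoinRoot h)) (AdjoinRoot.root h) (b w) = b (w + 1) := by
      rw [Algebra.coe_lmul_eq_mul, LinearMap.mul_apply', hb, hb]
      rw [← pow_succ']
      apply hpowmod
      push_cast
      rw [ZMod.natCast_val, ZMod.natCast_val, ZMod.cast_id, ZMod.cast_id]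
    rw [hmul, Basis.repr_self, Finsupp.single_apply]
    simp [eq_comm]
  have hcoe : ∀ f : AdjoinRoot h →ₗ[Fq] AdjoinRoot h, LinearMap.toMatrixAlgEquiv b f = LinearMap.toMatrix b b f :=
    fun f => rfl
  have hAeval : ∀ G : Fq[X], (aeval Pᵀ) G
      = LinearMap.toMatrix b b ((Algebra.lmul Fq (AdjoinRoot h)) (AdjoinRoot.mk h G)) := by
    intro G
    rw [hPt, ← hcoe, ← hcoe, aeval_algHom_apply, aeval_algHom_apply, AdjoinRoot.aeval_eq]
  have hrank : ∀ G : Fq[X], ((aeval Pᵀ) G).rank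
      = finrank Fq (LinearMap.range ((Algebra.lmul Fq (AdjoinRoot h)) (AdjoinRoot.mk h G))) := by
    intro G
    rw [hAeval G, Matrix.rank_eq_finrank_range_toLin _ b b, Matrix.toLin_toMatrix]
  -- number theory setup
  set a : ℕ := n.factorization p with hadef
  set m : ℕ := n / p ^ a with hmdef
  set b0 : ℕ := i.factorization p with hb0def
  set j : ℕ := i / p ^ b0 with hjdef
  have hnm : p ^ a * m = n := Nat.ordProj_mul_ordCompl_eq_self n p
  have hij : p ^ b0 * j = i := Nat.ordProj_mul_ordCompl_eq_self i p
  have hpm : ¬ p ∣ m := Nat.not_dvd_ordCompl hp hn0.ne'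
  have hpj : ¬ p ∣ j := Nat.not_dvd_ordCompl hp hi.ne'
  have hm0 : 0 < m := by
    rcases Nat.eq_zero_or_pos m with hh0 | hh0
    · rw [hh0, mul_zero] at hnm; omega
    · exact hh0
  have hj0 : 0 < j := by
    rcases Nat.eq_zero_or_pos j with hh0 | hh0
    · rw [hh0, mul_zero] at hij; omega
    · exact hh0
  set c : ℕ := Nat.gcd j m with hcdef
  have hc0 : 0 < c := Nat.gcd_pos_of_pos_left m hj0
  set u : Fq[X] := X ^ j - 1 with hudef
  set v : Fq[X] := X ^ m - 1 with hvdef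
  set w : Fq[X] := X ^ c - 1 with hwdef
  have mw : w.Monic := by
    have := monic_X_pow_sub_C (1 : Fq) hc0.ne'
    simpa [hwdef, _root_.map_one] using this
  have mu : u.Monic := by
    have := monic_X_pow_sub_C (1 : Fq) hj0.ne'
    simpa [hudef, _root_.map_one] using this
  have mv : v.Monic := by
    have := monic_X_pow_sub_C (1 : Fq) hm0.ne'
    simpa [hvdef, _root_.map_one] using this
  have hdegw : w.natDegree = c := by
    have : (X ^ c - C (1 : Fq)).natDegree = c := natDegree_X_pow_sub_C
    simpa [hwdef, _root_.map_one] using this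
  obtain ⟨u₁, hu⟩ : w ∣ u := aux_dvd_pow_sub_one (Nat.gcd_dvd_left j m)
  obtain ⟨v₁, hv⟩ : w ∣ v := aux_dvd_pow_sub_one (Nat.gcd_dvd_right j m)
  have mu₁ : u₁.Monic := mw.of_mul_monic_left (hu ▸ mu)
  have mv₁ : v₁.Monic := mw.of_mul_monic_left (hv ▸ mv)
  have hjF : ((j : ℕ) : Fq) ≠ 0 := by
    rw [Ne, CharP.cast_eq_zero_iff Fq p]; exact hpj
  have hmF : ((m : ℕ) : Fq) ≠ 0 := by
    rw [Ne, CharP.cast_eq_zero_iff Fq p]; exact hpm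
  have squ : Squarefree u := (X_pow_sub_one_separable_iff.mpr hjF).squarefree
  have sqv : Squarefree v := (X_pow_sub_one_separable_iff.mpr hmF).squarefree
  have hwu : IsCoprime w u₁ := by
    rw [← EuclideanDomain.gcd_isUnit_iff]
    refine squ _ ?_
    rw [hu]
    exact mul_dvd_mul (EuclideanDomain.gcd_dvd_left w u₁) (EuclideanDomain.gcd_dvd_right w u₁)
  have hwv : IsCoprime w v₁ := by
    rw [← EuclideanDomain.gcd_isUnit_iff]
    refine sqv _ ?_
    rw [hv]
    exact mul_dvd_mul (EuclideanDomain.gcd_dvd_left w v₁) (EuclideanDomain.gcd_dvd_right w v₁)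
  have huv : IsCoprime u₁ v₁ := by
    rw [← EuclideanDomain.gcd_isUnit_iff]
    have hγu : EuclideanDomain.gcd u₁ v₁ ∣ u :=
      (EuclideanDomain.gcd_dvd_left u₁ v₁).trans (by rw [hu]; exact dvd_mul_left u₁ w)
    have hγv : EuclideanDomain.gcd u₁ v₁ ∣ v :=
      (EuclideanDomain.gcd_dvd_right u₁ v₁).trans (by rw [hv]; exact dvd_mul_left v₁ w)
    have hγw : EuclideanDomain.gcd u₁ v₁ ∣ w := aux_common_dvd j m _ hγu hγv
    exact hwu.isUnit_of_dvd' hγw (EuclideanDomain.gcd_dvd_left u₁ v₁)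
  set A : ℕ := p ^ b0 * 2 with hAdef
  set B : ℕ := p ^ a with hBdef
  have hGu : ((X ^ i - 1 : Fq[X])) ^ 2 = u ^ A := by
    have h1 : (X ^ i - 1 : Fq[X]) = u ^ (p ^ b0) := by
      rw [hudef, sub_pow_char_pow (R := Fq[X]), one_pow, ← pow_mul]
      rw [mul_comm j (p ^ b0), hij]
    rw [h1, ← pow_mul]
  have hHv : h = v ^ B := by
    rw [hhdef, hvdef, hBdef, sub_pow_char_pow (R := Fq[X]), one_pow, ← pow_mul]
    rw [mul_comm m (p ^ a), hnm]
  rw [hrk1, hrank]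
  rcases le_or_gt a b0 with hab | hab
  · -- p ∤ l, rank = n - d
    have hBA : B ≤ A := by
      have h1 : p ^ a ≤ p ^ b0 := Nat.pow_le_pow_right hp.pos hab
      omega
    have hwA : w ^ A = w ^ B * w ^ (A - B) := by
      rw [← pow_add, Nat.add_sub_cancel' hBA]
    have hh2 : h = w ^ B * (v₁ ^ B) := by rw [hHv, hv, mul_pow]
    have hg2 : ((X ^ i - 1 : Fq[X])) ^ 2 = w ^ B * (w ^ (A - B) * u₁ ^ A) := by
      rw [hGu, hu, mul_pow, hwA]; ring
    have hco : IsCoprime (w ^ (A - B) * u₁ ^ A) (v₁ ^ B) :=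
      IsCoprime.mul_left hwv.pow huv.pow
    rw [aux_rank_lmul' h _ (w ^ B) (v₁ ^ B) (w ^ (A - B) * u₁ ^ A) hh2 hg2
      (mw.pow B).ne_zero (mv₁.pow B) hco]
    have hdval : d = B * c := by
      rw [hd, ← hij, ← hnm]
      have h5 : p ^ b0 * j = p ^ a * (p ^ (b0 - a) * j) := by
        rw [← mul_assoc, ← pow_add, Nat.add_sub_cancel' hab]
      rw [h5, Nat.gcd_mul_left, hBdef]
      congr 1
      exact Nat.Coprime.gcd_mul_left_cancel j
        (Nat.Coprime.pow_left _ (hp.coprime_iff_not_dvd.mpr hpm))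
    have hlval : l = m / c := by
      rw [hl, hdval, ← hnm, hBdef, Nat.mul_div_mul_left _ _ (pow_pos hp.pos a)]
    have hpl : ¬ p ∣ l := by
      rw [hlval]
      intro hdl
      exact hpm (hdl.trans (Nat.div_dvd_of_dvd (Nat.gcd_dvd_right j m)))
    rw [if_neg hpl]
    have hsum : (w ^ B).natDegree + (v₁ ^ B).natDegree = n := by
      rw [← natDegree_mul (mw.pow B).ne_zero (mv₁.pow B).ne_zero, ← hh2, hdeg]
    have hdege : (w ^ B).natDegree = B * c := by rw [natDegree_pow, hdegw]
    omega
  · -- p ∣ l, rank = n - 2d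
    have h3p : 3 ≤ p := by
      have := hp.two_le
      omega
    have hAB : A ≤ B := by
      have h1 : p ^ (b0 + 1) ≤ p ^ a := Nat.pow_le_pow_right hp.pos (by omega)
      have h2 : p ^ b0 * 2 ≤ p ^ b0 * p := Nat.mul_le_mul_left _ (by omega)
      have h3 : p ^ b0 * p = p ^ (b0 + 1) := (pow_succ p b0).symm
      omega
    have hwB : w ^ B = w ^ A * w ^ (B - A) := by
      rw [← pow_add, Nat.add_sub_cancel' hAB]
    have hh2 : h = w ^ A * (w ^ (B - A) * v₁ ^ B) := by
      rw [hHv, hv, mul_pow, hwB]; ring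
    have hg2 : ((X ^ i - 1 : Fq[X])) ^ 2 = w ^ A * (u₁ ^ A) := by
      rw [hGu, hu, mul_pow]
    have hco : IsCoprime (u₁ ^ A) (w ^ (B - A) * v₁ ^ B) :=
      IsCoprime.mul_right hwu.symm.pow huv.pow
    rw [aux_rank_lmul' h _ (w ^ A) (w ^ (B - A) * v₁ ^ B) (u₁ ^ A) hh2 hg2
      (mw.pow A).ne_zero ((mw.pow _).mul (mv₁.pow _)) hco]
    have hdval : d = p ^ b0 * c := by
      rw [hd, ← hij, ← hnm]
      have h5 : p ^ a * m = p ^ b0 * (p ^ (a - b0) * m) := by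
        rw [← mul_assoc, ← pow_add, Nat.add_sub_cancel' (le_of_lt hab)]
      rw [h5, Nat.gcd_mul_left]
      congr 1
      rw [Nat.gcd_comm j (p ^ (a - b0) * m),
        Nat.Coprime.gcd_mul_left_cancel m
          (Nat.Coprime.pow_left _ (hp.coprime_iff_not_dvd.mpr hpj)),
        Nat.gcd_comm]
    have hpl : p ∣ l := by
      rw [hl]
      have hdn : d ∣ n := hd ▸ Nat.gcd_dvd_right i n
      rw [Nat.dvd_div_iff_mul_dvd hdn]
      have h6 : p ^ (b0 + 1) * c ∣ p ^ a * m :=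
        mul_dvd_mul (pow_dvd_pow p (by omega)) (Nat.gcd_dvd_right j m)
      have h7 : d * p = p ^ (b0 + 1) * c := by rw [hdval, pow_succ]; ring
      rw [← h7, hnm] at h6
      exact h6
    rw [if_pos hpl]
    have hsum : (w ^ A).natDegree + (w ^ (B - A) * v₁ ^ B).natDegree = n := by
      rw [← natDegree_mul (mw.pow A).ne_zero ((mw.pow _).mul (mv₁.pow _)).ne_zero, ← hh2, hdeg]
    have hdege : (w ^ A).natDegree = A * c := by rw [natDegree_pow, hdegw]
    have hAc : A * c = 2 * (p ^ b0 * c) := by rw [hAdef]; ring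
    omega
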